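/- Let R be a unital associative ring and let A = [[a,b],[c,d]] be a 2×2 matrix over R. (i) If a, b, c, d are invertible, then the following are equivalent: A is invertible; J₂(A) is invertible; db⁻¹ − ca⁻¹ is invertible in R. (ii) If A is invertible, then all entries of A are invertible if and only if all entries of A⁻¹ are invertible. -/

import Mathlib

open Matrix

section KontsevichDefs

variable {R : Type*} [Ring R]

/-- `J₂`: the transposed Hadamard inverse, `J₂(M)_{jk} = (M_{kj})⁻¹`
(with `Ring.inverse`, which is the two-sided inverse on units and `0` elsewhere). -/
noncomputable def J2 {m : Type*} (M : Matrix m m R) : Matrix m m R :=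
  Matrix.of fun j k => Ring.inverse (M k j)

variable {m : Type*} [Fintype m] [DecidableEq m]

/-- `J = J₂ ∘ J₁`, where `J₁(M) = M⁻¹` is the usual matrix inverse. -/
noncomputable def Jmap (M : Matrix m m R) : Matrix m m R := J2 (Ring.inverse M)

/-- `J⁻¹ = J₁ ∘ J₂`. -/
noncomputable def JinvMap (M : Matrix m m R) : Matrix m m R := Ring.inverse (J2 M)

/-- `dom(J)`: `M` invertible and all entries of `M⁻¹` invertible. -/
def domJ (M : Matrix m m R) : Prop :=
  IsUnit M ∧ ∀ j k, IsUnit (Ring.inverse M j k)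

/-- `dom(J⁻¹)`: all entries of `M` invertible and `J₂(M)` invertible. -/
def domJinv (M : Matrix m m R) : Prop :=
  (∀ j k, IsUnit (M j k)) ∧ IsUnit (J2 M)

/-- `dom(Jⁿ)` defined recursively: `M ∈ dom(Jⁿ⁺¹)` iff `M ∈ dom(J)` and `J(M) ∈ dom(Jⁿ)`. -/
def domJpow : ℕ → Matrix m m R → Prop
  | 0, _ => True
  | n + 1, M => domJ M ∧ domJpow n (Jmap M)

/-- `A ∼ B`: `B = D₁⁻¹ A D₂` for diagonal matrices `D₁, D₂` with invertible diagonal entries. -/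
def simRel (A B : Matrix m m R) : Prop :=
  ∃ d₁ d₂ : m → Rˣ,
    B = Matrix.diagonal (fun i => (((d₁ i)⁻¹ : Rˣ) : R)) * A *
        Matrix.diagonal (fun i => ((d₂ i : Rˣ) : R))

/-- entrywise conjugation `x⁻¹ A x` by an invertible ring element. -/
def conjEntry {m' : Type*} (x : Rˣ) (A : Matrix m' m' R) : Matrix m' m' R :=
  Matrix.of fun j k => ((x⁻¹ : Rˣ) : R) * A j k * (x : R)

/-- `M̂ₙ(R)`: first row and first column consist entirely of `1`'s. -/
def Mhat {m' : Type*} [Zero m'] (A : Matrix m' m' R) : Prop :=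
  ∀ k, A 0 k = 1 ∧ A k 0 = 1

/-- `Λ^L(A)_{jk} = a₁₁ a_{j1}⁻¹ a_{jk} a_{1k}⁻¹`. -/
noncomputable def LamL {m' : Type*} [Zero m'] (A : Matrix m' m' R) : Matrix m' m' R :=
  Matrix.of fun j k => A 0 0 * Ring.inverse (A j 0) * A j k * Ring.inverse (A 0 k)

/-- `Λ^R(A)_{jk} = a_{j1}⁻¹ a_{jk} a_{1k}⁻¹ a₁₁`. -/
noncomputable def LamR {m' : Type*} [Zero m'] (A : Matrix m' m' R) : Matrix m' m' R :=
  Matrix.of fun j k => Ring.inverse (A j 0) * A j k * Ring.inverse (A 0 k) * A 0 0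

/-- `Φ(A) = J₂(Λ^L(A⁻¹))`. -/
noncomputable def Phi [Zero m] (A : Matrix m m R) : Matrix m m R := J2 (LamL (Ring.inverse A))

/-- `dom(Φ)`: `A ∈ M̂ₙ(R)`, all entries of `A` invertible, `A` invertible,
all entries of `A⁻¹` invertible. -/
def domPhi [Zero m] (A : Matrix m m R) : Prop :=
  Mhat A ∧ (∀ j k, IsUnit (A j k)) ∧ IsUnit A ∧ ∀ j k, IsUnit (Ring.inverse A j k)

/-- `Φ⁻¹(B) = Λ^R(J⁻¹(B)) = Λ^R((J₂ B)⁻¹)`. -/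
noncomputable def PhiInv [Zero m] (B : Matrix m m R) : Matrix m m R := LamR (Ring.inverse (J2 B))

/-- `dom(Φ⁻¹)`: `B ∈ M̂ₙ(R)`, all entries of `B` invertible, `J₂(B)` invertible,
all entries of `J₂(B)⁻¹` invertible. -/
def domPhiInv [Zero m] (B : Matrix m m R) : Prop :=
  Mhat B ∧ (∀ j k, IsUnit (B j k)) ∧ IsUnit (J2 B) ∧ ∀ j k, IsUnit (Ring.inverse (J2 B) j k)

/-- `dom(Φⁿ)` defined recursively. -/
def domPhipow [Zero m] : ℕ → Matrix m m R → Prop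
  | 0, _ => True
  | n + 1, A => domPhi A ∧ domPhipow n (Phi A)

/-- `Ψ = J₂ ∘ Φ ∘ J₂`. -/
noncomputable def Psi [Zero m] (A : Matrix m m R) : Matrix m m R := J2 (Phi (J2 A))

/-- `dom(Ψ)`: `A ∈ M̂ₙ(R)`, all entries of `A` invertible, `J₂(A) ∈ dom(Φ)`. -/
def domPsi [Zero m] (A : Matrix m m R) : Prop :=
  Mhat A ∧ (∀ j k, IsUnit (A j k)) ∧ domPhi (J2 A)

/-- every square submatrix (equinumerous injective choices of rows and columns) is invertible. -/
def allSquareSubInv (M : Matrix (Fin 3) (Fin 3) R) : Prop :=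
  ∀ (k : ℕ) (r c : Fin k → Fin 3), Function.Injective r → Function.Injective c →
    IsUnit (M.submatrix r c)

/-- only the `1×1` and `2×2` submatrices are required to be invertible. -/
def sub12Inv (M : Matrix (Fin 3) (Fin 3) R) : Prop :=
  (∀ j k, IsUnit (M j k)) ∧
  ∀ (r c : Fin 2 → Fin 3), Function.Injective r → Function.Injective c →
    IsUnit (M.submatrix r c)

/-- `S`: all square submatrices of `M` are invertible and `J₂(M)` is invertible. -/
def Sset (R : Type*) [Ring R] : Set (Matrix (Fin 3) (Fin 3) R) :=
  {M | allSquareSubInv M ∧ IsUnit (J2 M)}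

/-- `Ŝ = S ∩ M̂₃(R)`. -/
def Shat (R : Type*) [Ring R] : Set (Matrix (Fin 3) (Fin 3) R) :=
  {M | M ∈ Sset R ∧ Mhat M}

end KontsevichDefs

section Aux
variable {R : Type*} [Ring R]

lemma K227_schur_fwd {a b c d : R} (ua us : Rˣ) (ha : (ua : R) = a)
    (hs : (us : R) = d - c * Ring.inverse a * b) :
    IsUnit (!![a, b; c, d] : Matrix (Fin 2) (Fin 2) R) := by
  subst ha
  rw [Ring.inverse_unit] at hs
  have hd : d = (us : R) + c * (↑ua⁻¹ : R) * b := by rw [hs]; abel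
  subst hd
  refine isUnit_iff_exists.2 ⟨!![(↑ua⁻¹ : R) + ↑ua⁻¹ * b * ↑us⁻¹ * c * ↑ua⁻¹,
      -(↑ua⁻¹ * b * ↑us⁻¹); -(↑us⁻¹ * c * ↑ua⁻¹), (↑us⁻¹ : R)], ?_, ?_⟩ <;>
    · rw [Matrix.mul_fin_two, Matrix.one_fin_two]
      congr 1 <;> congr 1 <;>
        simp [mul_add, add_mul, mul_sub, sub_mul, neg_mul, mul_neg, mul_assoc,
          Units.mul_inv_cancel_left, Units.inv_mul_cancel_left] <;> abel

lemma K227_inv_eqs {M : Matrix (Fin 2) (Fin 2) R} (hM : IsUnit M) :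
    let B := Ring.inverse M
    (M 0 0 * B 0 0 + M 0 1 * B 1 0 = 1) ∧ (M 0 0 * B 0 1 + M 0 1 * B 1 1 = 0) ∧
    (M 1 0 * B 0 0 + M 1 1 * B 1 0 = 0) ∧ (M 1 0 * B 0 1 + M 1 1 * B 1 1 = 1) ∧
    (B 0 0 * M 0 0 + B 0 1 * M 1 0 = 1) ∧ (B 0 0 * M 0 1 + B 0 1 * M 1 1 = 0) ∧
    (B 1 0 * M 0 0 + B 1 1 * M 1 0 = 0) ∧ (B 1 0 * M 0 1 + B 1 1 * M 1 1 = 1) := by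
  intro B
  have h1 : M * B = 1 := Ring.mul_inverse_cancel M hM
  have h2 : B * M = 1 := Ring.inverse_mul_cancel M hM
  refine ⟨?_, ?_, ?_, ?_, ?_, ?_, ?_, ?_⟩
  · simpa [Matrix.mul_apply, Fin.sum_univ_two, Matrix.one_apply] using congrFun (congrFun h1 0) 0
  · simpa [Matrix.mul_apply, Fin.sum_univ_two, Matrix.one_apply] using congrFun (congrFun h1 0) 1
  · simpa [Matrix.mul_apply, Fin.sum_univ_two, Matrix.one_apply] using congrFun (congrFun h1 1) 0
  · simpa [Matrix.mul_apply, Fin.sum_univ_two, Matrix.one_apply] using congrFun (congrFun h1 1) 1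
  · simpa [Matrix.mul_apply, Fin.sum_univ_two, Matrix.one_apply] using congrFun (congrFun h2 0) 0
  · simpa [Matrix.mul_apply, Fin.sum_univ_two, Matrix.one_apply] using congrFun (congrFun h2 0) 1
  · simpa [Matrix.mul_apply, Fin.sum_univ_two, Matrix.one_apply] using congrFun (congrFun h2 1) 0
  · simpa [Matrix.mul_apply, Fin.sum_univ_two, Matrix.one_apply] using congrFun (congrFun h2 1) 1

lemma K227_schur_conv {M : Matrix (Fin 2) (Fin 2) R} (hM : IsUnit M) (ha : IsUnit (M 0 0)) :
    (M 1 1 - M 1 0 * Ring.inverse (M 0 0) * M 0 1) * (Ring.inverse M 1 1) = 1 ∧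
    (Ring.inverse M 1 1) * (M 1 1 - M 1 0 * Ring.inverse (M 0 0) * M 0 1) = 1 := by
  obtain ⟨e00, e01, e10, e11, f00, f01, f10, f11⟩ := K227_inv_eqs hM
  set B := Ring.inverse M with hB
  constructor
  · have hb : M 0 1 * B 1 1 = -(M 0 0 * B 0 1) := by
      rw [eq_neg_iff_add_eq_zero, add_comm]; exact e01
    calc (M 1 1 - M 1 0 * Ring.inverse (M 0 0) * M 0 1) * B 1 1
        = M 1 1 * B 1 1 - M 1 0 * Ring.inverse (M 0 0) * (M 0 1 * B 1 1) := by
          rw [sub_mul, mul_assoc]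
      _ = M 1 1 * B 1 1 + M 1 0 * (Ring.inverse (M 0 0) * (M 0 0 * B 0 1)) := by
          rw [hb, mul_neg, sub_neg_eq_add, mul_assoc]
      _ = M 1 0 * B 0 1 + M 1 1 * B 1 1 := by
          rw [Ring.inverse_mul_cancel_left _ _ ha, add_comm]
      _ = 1 := e11
  · have hb : B 1 0 * M 0 0 = -(B 1 1 * M 1 0) := by
      rw [eq_neg_iff_add_eq_zero]; exact f10
    calc B 1 1 * (M 1 1 - M 1 0 * Ring.inverse (M 0 0) * M 0 1)
        = B 1 1 * M 1 1 - B 1 1 * M 1 0 * Ring.inverse (M 0 0) * M 0 1 := by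
          rw [mul_sub]; noncomm_ring
      _ = B 1 1 * M 1 1 + B 1 0 * M 0 0 * Ring.inverse (M 0 0) * M 0 1 := by
          rw [hb]; noncomm_ring
      _ = B 1 0 * M 0 1 + B 1 1 * M 1 1 := by
          rw [Ring.mul_inverse_cancel_right _ _ ha, add_comm]
      _ = 1 := f11

lemma K227_schur_conv' {M : Matrix (Fin 2) (Fin 2) R} (hM : IsUnit M) (hd : IsUnit (M 1 1)) :
    (M 0 0 - M 0 1 * Ring.inverse (M 1 1) * M 1 0) * (Ring.inverse M 0 0) = 1 ∧
    (Ring.inverse M 0 0) * (M 0 0 - M 0 1 * Ring.inverse (M 1 1) * M 1 0) = 1 := by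
  obtain ⟨e00, e01, e10, e11, f00, f01, f10, f11⟩ := K227_inv_eqs hM
  set B := Ring.inverse M with hB
  constructor
  · have hb : M 1 0 * B 0 0 = -(M 1 1 * B 1 0) := by
      rw [eq_neg_iff_add_eq_zero]; exact e10
    calc (M 0 0 - M 0 1 * Ring.inverse (M 1 1) * M 1 0) * B 0 0
        = M 0 0 * B 0 0 - M 0 1 * Ring.inverse (M 1 1) * (M 1 0 * B 0 0) := by
          rw [sub_mul, mul_assoc]
      _ = M 0 0 * B 0 0 + M 0 1 * (Ring.inverse (M 1 1) * (M 1 1 * B 1 0)) := by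
          rw [hb, mul_neg, sub_neg_eq_add, mul_assoc]
      _ = M 0 0 * B 0 0 + M 0 1 * B 1 0 := by
          rw [Ring.inverse_mul_cancel_left _ _ hd]
      _ = 1 := e00
  · have hb : B 0 1 * M 1 1 = -(B 0 0 * M 0 1) := by
      rw [eq_neg_iff_add_eq_zero, add_comm]; exact f01
    calc B 0 0 * (M 0 0 - M 0 1 * Ring.inverse (M 1 1) * M 1 0)
        = B 0 0 * M 0 0 - B 0 0 * M 0 1 * Ring.inverse (M 1 1) * M 1 0 := by
          rw [mul_sub]; noncomm_ring
      _ = B 0 0 * M 0 0 + B 0 1 * M 1 1 * Ring.inverse (M 1 1) * M 1 0 := by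
          rw [hb]; noncomm_ring
      _ = B 0 0 * M 0 0 + B 0 1 * M 1 0 := by
          rw [Ring.mul_inverse_cancel_right _ _ hd]
      _ = 1 := f00

lemma K227_schur_iff (M : Matrix (Fin 2) (Fin 2) R) (ha : IsUnit (M 0 0)) :
    IsUnit M ↔ IsUnit (M 1 1 - M 1 0 * Ring.inverse (M 0 0) * M 0 1) := by
  constructor
  · intro hM
    obtain ⟨hs1, hs2⟩ := K227_schur_conv hM ha
    exact isUnit_iff_exists.2 ⟨_, hs1, hs2⟩
  · intro hs
    obtain ⟨ua, hua⟩ := ha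
    obtain ⟨us, hus⟩ := hs
    rw [Matrix.eta_fin_two M]
    exact K227_schur_fwd ua us hua hus

lemma K227_inv_entries {M : Matrix (Fin 2) (Fin 2) R} (hM : IsUnit M)
    (h : ∀ j k, IsUnit (M j k)) : ∀ j k, IsUnit (Ring.inverse M j k) := by
  obtain ⟨e00, e01, e10, e11, f00, f01, f10, f11⟩ := K227_inv_eqs hM
  set B := Ring.inverse M with hB
  have h11 : IsUnit (B 1 1) := by
    obtain ⟨hs1, hs2⟩ := K227_schur_conv hM (h 0 0)
    exact isUnit_iff_exists.2 ⟨_, hs2, hs1⟩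
  have h00 : IsUnit (B 0 0) := by
    obtain ⟨hs1, hs2⟩ := K227_schur_conv' hM (h 1 1)
    exact isUnit_iff_exists.2 ⟨_, hs2, hs1⟩
  have h01 : IsUnit (B 0 1) := by
    have e : M 0 0 * B 0 1 = -(M 0 1 * B 1 1) := by
      rw [eq_neg_iff_add_eq_zero]; exact e01
    have hq : B 0 1 = -(Ring.inverse (M 0 0) * (M 0 1 * B 1 1)) := by
      rw [← mul_neg, ← e, Ring.inverse_mul_cancel_left _ _ (h 0 0)]
    rw [hq]
    exact ((h 0 0).ringInverse.mul ((h 0 1).mul h11)).neg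
  have h10 : IsUnit (B 1 0) := by
    have e : B 1 0 * M 0 0 = -(B 1 1 * M 1 0) := by
      rw [eq_neg_iff_add_eq_zero]; exact f10
    have hq : B 1 0 = -(B 1 1 * M 1 0 * Ring.inverse (M 0 0)) := by
      rw [← neg_mul, ← e, Ring.mul_inverse_cancel_right _ _ (h 0 0)]
    rw [hq]
    exact ((h11.mul (h 1 0)).mul (h 0 0).ringInverse).neg
  intro j k
  fin_cases j <;> fin_cases k <;> assumption

end Aux

theorem two_by_two_invertibility {R : Type*} [Ring R] (a b c d : R) :
    ((IsUnit a ∧ IsUnit b ∧ IsUnit c ∧ IsUnit d) →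
      ((IsUnit (!![a, b; c, d] : Matrix (Fin 2) (Fin 2) R) ↔
          IsUnit (J2 (!![a, b; c, d] : Matrix (Fin 2) (Fin 2) R))) ∧
       (IsUnit (!![a, b; c, d] : Matrix (Fin 2) (Fin 2) R) ↔
          IsUnit (d * Ring.inverse b - c * Ring.inverse a)))) ∧
    (IsUnit (!![a, b; c, d] : Matrix (Fin 2) (Fin 2) R) →
      ((IsUnit a ∧ IsUnit b ∧ IsUnit c ∧ IsUnit d) ↔
        ∀ j k, IsUnit (Ring.inverse (!![a, b; c, d] : Matrix (Fin 2) (Fin 2) R) j k))) := by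
  constructor
  · rintro ⟨ha, hb, hc, hd⟩
    obtain ⟨ua, rfl⟩ := ha
    obtain ⟨ub, rfl⟩ := hb
    obtain ⟨uc, rfl⟩ := hc
    obtain ⟨ud, rfl⟩ := hd
    -- criterion for A
    have hA := K227_schur_iff (!![(↑ua : R), ↑ub; ↑uc, ↑ud]) (by simp)
    have hent : (!![(↑ua : R), ↑ub; ↑uc, ↑ud] : Matrix (Fin 2) (Fin 2) R) 1 1 -
        !![(↑ua : R), ↑ub; ↑uc, ↑ud] 1 0 * Ring.inverse (!![(↑ua : R), ↑ub; ↑uc, ↑ud] 0 0) *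
        !![(↑ua : R), ↑ub; ↑uc, ↑ud] 0 1 = (↑ud : R) - ↑uc * ↑ua⁻¹ * ↑ub := by
      simp
    rw [hent] at hA
    have key : (↑ud : R) - ↑uc * ↑ua⁻¹ * ↑ub = ((↑ud : R) * ↑ub⁻¹ - ↑uc * ↑ua⁻¹) * ↑ub := by
      rw [sub_mul, Units.inv_mul_cancel_right]
    have h2 : IsUnit (!![(↑ua : R), ↑ub; ↑uc, ↑ud] : Matrix (Fin 2) (Fin 2) R) ↔
        IsUnit ((↑ud : R) * Ring.inverse (↑ub : R) - ↑uc * Ring.inverse (↑ua : R)) := by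
      rw [hA, key, Ring.inverse_unit, Ring.inverse_unit, Units.isUnit_mul_units]
    -- criterion for J2 A
    have hJ2eq : J2 (!![(↑ua : R), ↑ub; ↑uc, ↑ud] : Matrix (Fin 2) (Fin 2) R) =
        !![(↑ua⁻¹ : R), ↑uc⁻¹; ↑ub⁻¹, ↑ud⁻¹] := by
      ext i j
      fin_cases i <;> fin_cases j <;> simp [J2]
    have hA' := K227_schur_iff (!![(↑ua⁻¹ : R), ↑uc⁻¹; ↑ub⁻¹, ↑ud⁻¹]) (by simp)
    have hent' : (!![(↑ua⁻¹ : R), ↑uc⁻¹; ↑ub⁻¹, ↑ud⁻¹] : Matrix (Fin 2) (Fin 2) R) 1 1 -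
        !![(↑ua⁻¹ : R), ↑uc⁻¹; ↑ub⁻¹, ↑ud⁻¹] 1 0 *
        Ring.inverse (!![(↑ua⁻¹ : R), ↑uc⁻¹; ↑ub⁻¹, ↑ud⁻¹] 0 0) *
        !![(↑ua⁻¹ : R), ↑uc⁻¹; ↑ub⁻¹, ↑ud⁻¹] 0 1 = (↑ud⁻¹ : R) - ↑ub⁻¹ * ↑ua * ↑uc⁻¹ := by
      simp
    rw [hent'] at hA'
    have key2 : (↑ud⁻¹ : R) - ↑ub⁻¹ * ↑ua * ↑uc⁻¹ =
        -(↑ud⁻¹ * (((↑ud : R) * ↑ub⁻¹ - ↑uc * ↑ua⁻¹) * (↑ua * ↑uc⁻¹))) := by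
      simp [mul_sub, sub_mul, mul_assoc, Units.inv_mul_cancel_left, Units.mul_inv_cancel_left,
        neg_sub, Units.mul_inv_cancel_right, Units.inv_mul_cancel_right]
    have h3 : IsUnit (J2 (!![(↑ua : R), ↑ub; ↑uc, ↑ud] : Matrix (Fin 2) (Fin 2) R)) ↔
        IsUnit ((↑ud : R) * Ring.inverse (↑ub : R) - ↑uc * Ring.inverse (↑ua : R)) := by
      rw [hJ2eq, hA', key2, IsUnit.neg_iff, Ring.inverse_unit, Ring.inverse_unit]
      rw [show ((↑ua : R) * ↑uc⁻¹) = ((ua * uc⁻¹ : Rˣ) : R) from rfl]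
      rw [Units.isUnit_units_mul, Units.isUnit_mul_units]
    exact ⟨h2.trans h3.symm, h2⟩
  · intro hA
    constructor
    · rintro ⟨ha, hb, hc, hd⟩
      exact K227_inv_entries hA (by intro j k; fin_cases j <;> fin_cases k <;> simpa)
    · intro h
      have hB : IsUnit (Ring.inverse (!![a, b; c, d] : Matrix (Fin 2) (Fin 2) R)) :=
        hA.ringInverse
      have hinv : Ring.inverse (Ring.inverse (!![a, b; c, d] : Matrix (Fin 2) (Fin 2) R)) =
          !![a, b; c, d] := by
        obtain ⟨u, hu⟩ := hA
        rw [← hu, Ring.inverse_unit, Ring.inverse_unit, inv_inv]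
      have h' := K227_inv_entries hB h
      rw [hinv] at h'
      exact ⟨by simpa using h' 0 0, by simpa using h' 0 1, by simpa using h' 1 0,
        by simpa using h' 1 1⟩
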